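/- (Proposition 2) Assume the p=3 parasupersymmetry algebra. If Ψ ∈ 𝓗 is a simultaneous eigenvector of S (i.e. Ψ ≠ 0 and Ψ is an eigenvector of each of the nine operators in S), then each of QΨ and Q†Ψ is either zero or again a simultaneous eigenvector of all nine operators in S. -/

import Mathlib

open ContinuousLinearMap

/-- The set `S` of nine operators `{H, QQ†, Q†Q, Q²Q†², Q†²Q², QQ†²Q, Q†Q²Q†, QQ†QQ†, Q†QQ†Q}`. -/
def opSetS {𝓗 : Type*} [NormedAddCommGroup 𝓗] [InnerProductSpace ℂ 𝓗] [CompleteSpace 𝓗]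
    (Q H : 𝓗 →L[ℂ] 𝓗) : Set (𝓗 →L[ℂ] 𝓗) :=
  {H, Q * adjoint Q, adjoint Q * Q,
    Q ^ 2 * (adjoint Q) ^ 2, (adjoint Q) ^ 2 * Q ^ 2,
    Q * (adjoint Q) ^ 2 * Q, adjoint Q * Q ^ 2 * adjoint Q,
    Q * adjoint Q * Q * adjoint Q, adjoint Q * Q * adjoint Q * Q}

/-- `Ψ` is a simultaneous eigenvector of the nine operators in `S`. -/
def IsSimulEig {𝓗 : Type*} [NormedAddCommGroup 𝓗] [InnerProductSpace ℂ 𝓗] [CompleteSpace 𝓗]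
    (Q H : 𝓗 →L[ℂ] 𝓗) (Ψ : 𝓗) : Prop :=
  Ψ ≠ 0 ∧ ∀ A ∈ opSetS Q H, ∃ μ : ℂ, A Ψ = μ • Ψ

lemma opSetS_adjoint {𝓗 : Type*} [NormedAddCommGroup 𝓗] [InnerProductSpace ℂ 𝓗]
    [CompleteSpace 𝓗] (Q H : 𝓗 →L[ℂ] 𝓗) : opSetS (adjoint Q) H = opSetS Q H := by
  ext A
  simp only [opSetS, adjoint_adjoint, Set.mem_insert_iff, Set.mem_singleton_iff]
  tauto

lemma isSimulEig_adjoint_iff {𝓗 : Type*} [NormedAddCommGroup 𝓗] [InnerProductSpace ℂ 𝓗]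
    [CompleteSpace 𝓗] (Q H : 𝓗 →L[ℂ] 𝓗) (v : 𝓗) :
    IsSimulEig (adjoint Q) H v ↔ IsSimulEig Q H v := by
  unfold IsSimulEig
  rw [opSetS_adjoint]

lemma aux_stmt5 {𝓗 : Type*} [NormedAddCommGroup 𝓗] [InnerProductSpace ℂ 𝓗] [CompleteSpace 𝓗]
    (Q H : 𝓗 →L[ℂ] 𝓗)
    (hQH : Q * H = H * Q)
    (hii : Q ^ 3 * adjoint Q + Q ^ 2 * adjoint Q * Q + Q * adjoint Q * Q ^ 2
      + adjoint Q * Q ^ 3 = 6 * (Q ^ 2 * H))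
    (hiii : Q * (adjoint Q) ^ 2 * Q = adjoint Q * Q ^ 2 * adjoint Q)
    (Ψ : 𝓗) (hΨ : IsSimulEig Q H Ψ) :
    Q Ψ = 0 ∨ IsSimulEig Q H (Q Ψ) := by
  by_cases hz : Q Ψ = 0
  · exact Or.inl hz
  right
  obtain ⟨hΨ0, hS⟩ := hΨ
  obtain ⟨E, hE⟩ := hS H
    (by simp only [opSetS, Set.mem_insert_iff, Set.mem_singleton_iff]; tauto)
  obtain ⟨a, ha⟩ := hS (Q * adjoint Q)
    (by simp only [opSetS, Set.mem_insert_iff, Set.mem_singleton_iff]; tauto)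
  obtain ⟨b, hb⟩ := hS (adjoint Q * Q)
    (by simp only [opSetS, Set.mem_insert_iff, Set.mem_singleton_iff]; tauto)
  obtain ⟨d, hd⟩ := hS ((adjoint Q) ^ 2 * Q ^ 2)
    (by simp only [opSetS, Set.mem_insert_iff, Set.mem_singleton_iff]; tauto)
  obtain ⟨e, he⟩ := hS (Q * (adjoint Q) ^ 2 * Q)
    (by simp only [opSetS, Set.mem_insert_iff, Set.mem_singleton_iff]; tauto)
  simp only [mul_apply_eq_comp, pow_succ, pow_zero, one_mul] at ha hb hd he
  -- ha : Q (adjoint Q Ψ) = a • Ψ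
  -- hb : adjoint Q (Q Ψ) = b • Ψ
  -- hd : adjoint Q (adjoint Q (Q (Q Ψ))) = d • Ψ
  -- he : Q (adjoint Q (adjoint Q (Q Ψ))) = e • Ψ
  have hbnz : b ≠ 0 := by
    intro h0
    apply hz
    have h1 : (inner ℂ (Q Ψ) (Q Ψ) : ℂ) = 0 := by
      rw [← adjoint_inner_left, hb, h0]
      simp
    exact inner_self_eq_zero.mp h1
  -- Claim A : Q† Q² Ψ = (d/b) • Q Ψ
  have hA : adjoint Q (Q (Q Ψ)) = (d / b) • Q Ψ := by
    have h1 := congrArg (fun T : 𝓗 →L[ℂ] 𝓗 => T (Q Ψ)) hiii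
    simp only [mul_apply_eq_comp, pow_succ, pow_zero, one_mul] at h1
    rw [hd, hb] at h1
    simp only [map_smul] at h1
    -- h1 : d • Q Ψ = b • adjoint Q (Q (Q Ψ))
    rw [div_eq_inv_mul, mul_smul, h1, inv_smul_smul₀ hbnz]
  -- Q† Q³ Ψ = (6E - a - b - d/b) • Q² Ψ
  have hB : adjoint Q (Q (Q (Q Ψ))) = (6 * E - a - b - d / b) • Q (Q Ψ) := by
    have h2 := congrArg (fun T : 𝓗 →L[ℂ] 𝓗 => T Ψ) hii
    simp only [mul_apply_eq_comp, pow_succ, pow_zero, one_mul,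
      ContinuousLinearMap.add_apply, ContinuousLinearMap.ofNat_apply] at h2
    rw [ha, hb, hA, hE] at h2
    simp only [map_smul, smul_smul] at h2
    rw [← Nat.cast_smul_eq_nsmul ℂ] at h2
    -- h2 : a • Q (Q Ψ) + b • Q (Q Ψ) + (d/b) • Q (Q Ψ) + Q† Q³ Ψ = 6 • (E • Q (Q Ψ))
    linear_combination (norm := module) h2
  refine ⟨hz, ?_⟩
  intro A hAmem
  simp only [opSetS, Set.mem_insert_iff, Set.mem_singleton_iff] at hAmem
  rcases hAmem with rfl | rfl | rfl | rfl | rfl | rfl | rfl | rfl | rfl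
  · -- H
    refine ⟨E, ?_⟩
    have h1 := congrArg (fun T : 𝓗 →L[ℂ] 𝓗 => T Ψ) hQH
    simp only [mul_apply_eq_comp] at h1
    rw [hE, map_smul] at h1
    rw [← h1]
  · -- Q Q†
    refine ⟨b, ?_⟩
    simp only [mul_apply_eq_comp, hb, map_smul]
  · -- Q† Q
    refine ⟨d / b, ?_⟩
    simp only [mul_apply_eq_comp, hA]
  · -- Q² Q†²
    refine ⟨e, ?_⟩
    simp only [mul_apply_eq_comp, pow_succ, pow_zero, one_mul, he, map_smul]
  · -- Q†² Q²
    refine ⟨(6 * E - a - b - d / b) * (d / b), ?_⟩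
    simp only [mul_apply_eq_comp, pow_succ, pow_zero, one_mul, hB, map_smul, hA, smul_smul]
  · -- Q Q†² Q
    refine ⟨d, ?_⟩
    simp only [mul_apply_eq_comp, pow_succ, pow_zero, one_mul, hd, map_smul]
  · -- Q† Q² Q†
    refine ⟨b * (d / b), ?_⟩
    simp only [mul_apply_eq_comp, pow_succ, pow_zero, one_mul, hb, map_smul, hA, smul_smul]
  · -- Q Q† Q Q†
    refine ⟨b * b, ?_⟩
    simp only [mul_apply_eq_comp, hb, map_smul, smul_smul]
  · -- Q† Q Q† Q
    refine ⟨(d / b) * (d / b), ?_⟩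
    simp only [mul_apply_eq_comp, hA, map_smul, smul_smul]

/-- Proposition 2: Assuming the p=3 parasupersymmetry algebra, if `Ψ` is a
simultaneous eigenvector of `S`, then each of `QΨ` and `Q†Ψ` is either zero or again a
simultaneous eigenvector of all nine operators in `S`. -/
theorem stmt5 {𝓗 : Type*} [NormedAddCommGroup 𝓗] [InnerProductSpace ℂ 𝓗] [CompleteSpace 𝓗]
    (Q H : 𝓗 →L[ℂ] 𝓗) (hH : IsSelfAdjoint H)
    (hQH : Q * H = H * Q) (hQdH : adjoint Q * H = H * adjoint Q)
    (hii : Q ^ 3 * adjoint Q + Q ^ 2 * adjoint Q * Q + Q * adjoint Q * Q ^ 2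
      + adjoint Q * Q ^ 3 = 6 * (Q ^ 2 * H))
    (hiii : Q * (adjoint Q) ^ 2 * Q = adjoint Q * Q ^ 2 * adjoint Q)
    (hiv : (adjoint Q) ^ 3 * Q + (adjoint Q) ^ 2 * Q * adjoint Q
      + adjoint Q * Q * (adjoint Q) ^ 2 + Q * (adjoint Q) ^ 3 = 6 * ((adjoint Q) ^ 2 * H))
    (hQ4 : Q ^ 4 = 0) (hQd4 : (adjoint Q) ^ 4 = 0)
    (Ψ : 𝓗) (hΨ : IsSimulEig Q H Ψ) :
    (Q Ψ = 0 ∨ IsSimulEig Q H (Q Ψ)) ∧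
      (adjoint Q Ψ = 0 ∨ IsSimulEig Q H (adjoint Q Ψ)) := by
  constructor
  · exact aux_stmt5 Q H hQH hii hiii Ψ hΨ
  · have h := aux_stmt5 (adjoint Q) H hQdH
      (by simp only [adjoint_adjoint]; exact hiv)
      (by simp only [adjoint_adjoint]; exact hiii.symm)
      Ψ ((isSimulEig_adjoint_iff Q H Ψ).mpr hΨ)
    rcases h with h | h
    · exact Or.inl h
    · exact Or.inr ((isSimulEig_adjoint_iff Q H _).mp h)
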